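/- Let f : [0,∞) → ℝ be (α,m)-convex with (α,m) ∈ (0,1]². If 0 ≤ a < b < ∞ and f is integrable on [a,b], then (1/(b-a)) ∫_a^b f(x) dx ≤ (1/2)·[f(a) + f(b) + mα·f(a/m) + mα·f(b/m)]/(α+1). -/

import Mathlib

open intervalIntegral MeasureTheory

theorem alpha_m_convex_hh_right (f : ℝ → ℝ) (α m a b : ℝ)
    (hα : α ∈ Set.Ioc (0:ℝ) 1) (hm : m ∈ Set.Ioc (0:ℝ) 1)
    (hconv : ∀ x, 0 ≤ x → ∀ y, 0 ≤ y → ∀ t ∈ Set.Icc (0:ℝ) 1,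
      f (t * x + m * (1 - t) * y) ≤ t ^ α * f x + m * (1 - t ^ α) * f y)
    (ha : 0 ≤ a) (hab : a < b)
    (hint : IntervalIntegrable f MeasureTheory.volume a b) :
    (1 / (b - a)) * ∫ x in a..b, f x ≤
      (1 / 2) * ((f a + f b + m * α * f (a / m) + m * α * f (b / m)) / (α + 1)) := by
  obtain ⟨hα0, hα1⟩ := hα
  obtain ⟨hm0, hm1⟩ := hm
  have hm' : m ≠ 0 := ne_of_gt hm0
  have hb : 0 ≤ b := le_trans ha hab.le
  have hba : b - a ≠ 0 := sub_ne_zero.mpr (ne_of_gt hab)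
  have hα1' : α + 1 ≠ 0 := by positivity
  -- integral of t^α over [0,1]
  have hrpow_int : IntervalIntegrable (fun t : ℝ => t ^ α) volume 0 1 :=
    intervalIntegral.intervalIntegrable_rpow' (by linarith)
  have hrpow_val : (∫ t in (0:ℝ)..1, t ^ α) = 1 / (α + 1) := by
    rw [integral_rpow (Or.inl (by linarith))]
    rw [Real.one_rpow, Real.zero_rpow hα1']
    ring
  -- change of variables: average equals ∫₀¹ f(t*a+(1-t)*b)
  have hcomp1 : IntervalIntegrable (fun t : ℝ => f ((a - b) * t + b)) volume 0 1 := by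
    have h1 := (hint.comp_add_right b).comp_mul_left (c := a - b)
    have e1 : (a - b) / (a - b) = (1:ℝ) := div_self (sub_ne_zero.mpr (ne_of_lt hab))
    have e2 : (b - b) / (a - b) = (0:ℝ) := by simp
    rw [sub_self b, e1] at h1
    simpa using h1.symm
  have hcomp2 : IntervalIntegrable (fun t : ℝ => f ((b - a) * t + a)) volume 0 1 := by
    have h1 := (hint.comp_add_right a).comp_mul_left (c := b - a)
    have e1 : (b - a) / (b - a) = (1:ℝ) := div_self hba
    rw [sub_self a, e1] at h1
    simpa using h1
  have key1 : (∫ t in (0:ℝ)..1, f ((a - b) * t + b)) = (1 / (b - a)) * ∫ x in a..b, f x := by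
    rw [integral_comp_mul_add f (sub_ne_zero.mpr (ne_of_lt hab)) b]
    rw [intervalIntegral.integral_symm]
    simp only [smul_eq_mul, one_mul, mul_one]
    rw [show a - b = -(b - a) by ring]
    field_simp
    congr 1
    all_goals ring
  have key2 : (∫ t in (0:ℝ)..1, f ((b - a) * t + a)) = (1 / (b - a)) * ∫ x in a..b, f x := by
    rw [integral_comp_mul_add f hba a]
    simp only [smul_eq_mul, one_mul, mul_one]
    field_simp
    congr 1 <;> ring
  -- pointwise bounds
  have hbound1 : ∀ t ∈ Set.Icc (0:ℝ) 1,
      f ((a - b) * t + b) ≤ t ^ α * f a + m * (1 - t ^ α) * f (b / m) := by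
    intro t ht
    have := hconv a ha (b / m) (div_nonneg hb hm0.le) t ht
    have he : t * a + m * (1 - t) * (b / m) = (a - b) * t + b := by
      field_simp; ring
    rwa [he] at this
  have hbound2 : ∀ t ∈ Set.Icc (0:ℝ) 1,
      f ((b - a) * t + a) ≤ t ^ α * f b + m * (1 - t ^ α) * f (a / m) := by
    intro t ht
    have := hconv b hb (a / m) (div_nonneg ha hm0.le) t ht
    have he : t * b + m * (1 - t) * (a / m) = (b - a) * t + a := by
      field_simp; ring
    rwa [he] at this
  -- integrability of the RHS bounds
  have hrhs : ∀ c d : ℝ, IntervalIntegrable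
      (fun t : ℝ => t ^ α * c + m * (1 - t ^ α) * d) volume 0 1 := by
    intro c d
    apply (hrpow_int.mul_const c).add
    have : (fun t : ℝ => m * (1 - t ^ α) * d)
        = fun t : ℝ => (m * d) - (t ^ α) * (m * d) := by
      funext t; ring
    rw [this]
    exact (_root_.intervalIntegrable_const).sub (hrpow_int.mul_const (m * d))
  -- value of the RHS integral
  have hrhs_val : ∀ c d : ℝ, (∫ t in (0:ℝ)..1, (t ^ α * c + m * (1 - t ^ α) * d))
      = c / (α + 1) + m * (α / (α + 1)) * d := by
    intro c d
    have hrw : (fun t : ℝ => t ^ α * c + m * (1 - t ^ α) * d)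
        = fun t : ℝ => (m * d) + (t ^ α) * (c - m * d) := by
      funext t; ring
    rw [hrw, intervalIntegral.integral_add _root_.intervalIntegrable_const
      (hrpow_int.mul_const _)]
    simp only [intervalIntegral.integral_mul_const, hrpow_val,
      intervalIntegral.integral_const, smul_eq_mul]
    field_simp
    ring
  have hle1 : (1 / (b - a)) * (∫ x in a..b, f x) ≤ f a / (α + 1) + m * (α / (α + 1)) * f (b / m) := by
    rw [← key1, ← hrhs_val (f a) (f (b / m))]
    exact intervalIntegral.integral_mono_on zero_le_one hcomp1 (hrhs _ _) hbound1
  have hle2 : (1 / (b - a)) * (∫ x in a..b, f x) ≤ f b / (α + 1) + m * (α / (α + 1)) * f (a / m) := by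
    rw [← key2, ← hrhs_val (f b) (f (a / m))]
    exact intervalIntegral.integral_mono_on zero_le_one hcomp2 (hrhs _ _) hbound2
  have : (1 / 2) * ((f a + f b + m * α * f (a / m) + m * α * f (b / m)) / (α + 1))
      = (1/2) * ((f a / (α + 1) + m * (α / (α + 1)) * f (b / m))
        + (f b / (α + 1) + m * (α / (α + 1)) * f (a / m))) := by
    field_simp
    ring
  rw [this]
  linarith
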